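/- A point x* ∈ ℝᴺ is an extended equilibrium of the path-graph dynamics with integer vector k if and only if x*_1 = k₂, x*_N = k_{N-1}, x*_i = (k_{i-1} + k_{i+1})/2 for 2 ≤ i ≤ N-1, and k satisfies k₁ = k₂, k_N = k_{N-1}, and |k_{i+1} - 2k_i + k_{i-1}| ≤ 1 for 2 ≤ i ≤ N-1. -/
import Mathlib


/-- `x` is an extended equilibrium of the path-graph dynamics with quantization
levels `k` (components indexed by 1,…,N): `f_k(x) = 0` and `x ∈ closure (S_k)`. -/
def IsPathExtendedEquilibrium (N : ℕ) (x : ℕ → ℝ) (k : ℕ → ℤ) : Prop :=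
  ((k 2 : ℝ) - x 1 = 0) ∧
  (∀ i : ℕ, 2 ≤ i → i ≤ N - 1 → (k (i - 1) : ℝ) + (k (i + 1) : ℝ) - 2 * x i = 0) ∧
  ((k (N - 1) : ℝ) - x N = 0) ∧
  (∀ i : ℕ, 1 ≤ i → i ≤ N → (k i : ℝ) - 1/2 ≤ x i ∧ x i ≤ (k i : ℝ) + 1/2)

lemma int_eq_of_close (a b : ℤ) (h1 : (a : ℝ) - 1/2 ≤ b) (h2 : (b : ℝ) ≤ a + 1/2) :
    a = b := by
  have h3 : ((b - a : ℤ) : ℝ) ≤ 1/2 := by push_cast; linarith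
  have h4 : (-(1/2) : ℝ) ≤ ((b - a : ℤ) : ℝ) := by push_cast; linarith
  have h5 : |((b - a : ℤ) : ℝ)| ≤ 1/2 := abs_le.2 ⟨h4, h3⟩
  rw [← Int.cast_abs] at h5
  have : |b - a| ≤ 0 := by
    by_contra hc
    push_neg at hc
    have : (1 : ℤ) ≤ |b - a| := hc
    have : (1 : ℝ) ≤ (|b - a| : ℤ) := by exact_mod_cast this
    linarith
  have := abs_nonpos_iff.mp this
  omega

theorem path_extended_equilibrium_characterization (N : ℕ) (hN : 3 ≤ N)
    (x : ℕ → ℝ) (k : ℕ → ℤ) :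
    IsPathExtendedEquilibrium N x k ↔
      (x 1 = (k 2 : ℝ) ∧ x N = (k (N - 1) : ℝ) ∧
       (∀ i : ℕ, 2 ≤ i → i ≤ N - 1 → x i = ((k (i - 1) : ℝ) + (k (i + 1) : ℝ)) / 2) ∧
       k 1 = k 2 ∧ k N = k (N - 1) ∧
       (∀ i : ℕ, 2 ≤ i → i ≤ N - 1 → |k (i + 1) - 2 * k i + k (i - 1)| ≤ 1)) := by
  constructor
  · rintro ⟨h1, h2, h3, h4⟩
    have hx1 : x 1 = (k 2 : ℝ) := by linarith
    have hxN : x N = (k (N - 1) : ℝ) := by linarith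
    have hb1 := h4 1 le_rfl (by omega)
    have hbN := h4 N (by omega) le_rfl
    refine ⟨hx1, hxN, fun i hi1 hi2 => by have := h2 i hi1 hi2; linarith,
      int_eq_of_close _ _ (by rw [hx1] at hb1; exact hb1.1) (by rw [hx1] at hb1; exact hb1.2),
      int_eq_of_close _ _ (by rw [hxN] at hbN; exact hbN.1) (by rw [hxN] at hbN; exact hbN.2),
      fun i hi1 hi2 => ?_⟩
    have hx := h2 i hi1 hi2
    have hb := h4 i (by omega) (by omega)
    have habs : |((k (i+1) - 2 * k i + k (i-1) : ℤ) : ℝ)| ≤ 1 := by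
      rw [abs_le]
      push_cast
      constructor <;> linarith [hb.1, hb.2]
    rw [← Int.cast_abs] at habs
    exact_mod_cast habs
  · rintro ⟨hx1, hxN, hmid, hk1, hkN, hk⟩
    refine ⟨by linarith, fun i hi1 hi2 => by have := hmid i hi1 hi2; linarith,
      by linarith, fun i hi1 hi2 => ?_⟩
    rcases eq_or_ne i 1 with rfl | hne1
    · rw [hx1, hk1]; constructor <;> linarith
    rcases eq_or_ne i N with rfl | hneN
    · rw [hxN, hkN]; constructor <;> linarith
    have hi1' : 2 ≤ i := by omega
    have hi2' : i ≤ N - 1 := by omega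
    have hx := hmid i hi1' hi2'
    have hk' := hk i hi1' hi2'
    have hk'' : |((k (i+1) - 2 * k i + k (i-1) : ℤ) : ℝ)| ≤ 1 := by
      rw [← Int.cast_abs]; exact_mod_cast hk'
    rw [abs_le] at hk''
    push_cast at hk''
    rw [hx]
    constructor <;> [linarith [hk''.1]; linarith [hk''.2]]
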